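/- Let N be a 3-prime zero-symmetric left near-ring with N ≠ {0}, and d a multiplicative derivation of N such that d(xy) = d(y)·d(x) for all x, y ∈ N. Then d = 0. -/
import Mathlib


class LeftNearRing (N : Type*) extends AddGroup N, Mul N where
  mul_assoc : ∀ a b c : N, a * b * c = a * (b * c)
  left_distrib : ∀ a b c : N, a * (b + c) = a * b + a * c

section Aux

variable {N : Type*} [LeftNearRing N]

lemma lnrA (a b c : N) : a * b * c = a * (b * c) := LeftNearRing.mul_assoc a b c

lemma lnrL (a b c : N) : a * (b + c) = a * b + a * c := LeftNearRing.left_distrib a b c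

lemma lnr_mul_zero (a : N) : a * 0 = 0 := by
  have h := lnrL a 0 0
  rw [add_zero] at h
  exact (left_eq_add.mp h)

lemma lnr_mul_neg (a b : N) : a * (-b) = -(a * b) := by
  have h := lnrL a b (-b)
  rw [add_neg_cancel, lnr_mul_zero] at h
  exact (neg_eq_of_add_eq_zero_right h.symm).symm

lemma lnr_mul_sub (a b c : N) : a * (b - c) = a * b - a * c := by
  rw [sub_eq_add_neg, lnrL, lnr_mul_neg, ← sub_eq_add_neg]

end Aux

theorem stmt7 {N : Type*} [LeftNearRing N] (hN : ∃ x : N, x ≠ 0)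
    (hzs : ∀ x : N, 0 * x = 0)
    (hp : ∀ a b : N, (∀ n : N, a * n * b = 0) → a = 0 ∨ b = 0)
    (d : N → N) (hd : ∀ x y : N, d (x * y) = x * d y + d x * y)
    (hh : ∀ x y : N, d (x * y) = d y * d x) :
    ∀ x : N, d x = 0 := by
  -- (1) : a * d b + d a * b = d b * d a
  have e1 : ∀ a b : N, a * d b + d a * b = d b * d a := by
    intro a b; rw [← hd, hh]
  -- (N) : partial right distributivity :
  --   d c * (d a * b) = a * (d c * b) + d a * (c * b)
  have eN : ∀ a c b : N, d c * (d a * b) = a * (d c * b) + d a * (c * b) := by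
    intro a c b
    -- h1 : from e1 (a*c) b, using d(a*c) = d c * d a
    have h1 : a * (c * d b) + d c * (d a * b) = d b * (d c * d a) := by
      have h := e1 (a * c) b
      rw [hh a c] at h
      simp only [lnrA] at h
      exact h
    -- h2 : a * (e1 c b)
    have h2 : a * (c * d b) + a * (d c * b) = a * (d b * d c) := by
      rw [← lnrL]; exact congrArg (a * ·) (e1 c b)
    -- h3 : from e1 a (c*b), using d(c*b) = d b * d c
    have h3 : a * (d b * d c) + d a * (c * b) = d b * (d c * d a) := by
      have h := e1 a (c * b)
      rw [hh c b] at h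
      simp only [lnrA] at h
      exact h
    have hPQ : d c * (d a * b) = -(a * (c * d b)) + d b * (d c * d a) := by
      rw [← h1, neg_add_cancel_left]
    rw [hPQ, ← h3, ← h2, add_assoc, neg_add_cancel_left]
  -- (W) : d a * (a * b) = d a * (b * d a)
  have eW : ∀ a b : N, d a * (a * b) = d a * (b * d a) := by
    intro a b
    have X1 : d (a * (a * b)) = a * (a * d b) + a * (d a * b) + d a * (a * b) := by
      rw [hd a (a * b), hd a b, lnrL, add_assoc]
    have X2 : d (a * (a * b)) = a * (a * d b) + a * (d a * b) + d a * (b * d a) := by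
      rw [hh a (a * b), hh a b, lnrA (d b) (d a) (d a), eN a b (d a),
        ← e1 a b, lnrL, add_assoc]
    exact add_left_cancel (X1.symm.trans X2)
  -- key : d a * (b * (d a * c - c * d a)) = 0
  have key : ∀ a b c : N, d a * (b * (d a * c - c * d a)) = 0 := by
    intro a b c
    have h1 : d a * (a * (b * c)) = d a * (b * (c * d a)) := by
      rw [eW a (b * c), lnrA b c (d a)]
    have h2 : d a * (a * (b * c)) = d a * (b * (d a * c)) := by
      have h := congrArg (fun t => t * c) (eW a b)
      simp only [lnrA] at h
      exact h
    rw [lnr_mul_sub, lnr_mul_sub, ← h2, ← h1, sub_self]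
  -- main argument
  intro x
  by_contra hx
  -- d x commutes with everything
  have comm : ∀ z : N, d x * z = z * d x := by
    intro z
    have h := hp (d x) (d x * z - z * d x) (fun n => by
      rw [lnrA]; exact key x n z)
    rcases h with h | h
    · exact absurd h hx
    · exact sub_eq_zero.mp h
  -- W0 : d x * (x * b) = d x * (d x * b)
  have W0 : ∀ b : N, d x * (x * b) = d x * (d x * b) := by
    intro b
    rw [eW x b, ← comm b]
  -- c * (c * y) = 0 for all y
  have sq : ∀ y : N, d x * (d x * y) = 0 := by
    intro y
    have h := e1 x (x * y)
    rw [hh x y] at h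
    -- h : x * (d y * d x) + d x * (x * y) = d y * d x * d x
    have hl : x * (d y * d x) = d x * (d x * d y) := by
      rw [← comm (d y), ← lnrA, ← comm x, lnrA, W0 (d y)]
    have hr : d y * d x * d x = d x * (d x * d y) := by
      rw [← comm (d y), lnrA, ← comm (d y)]
    rw [hl, hr, W0 y] at h
    -- h : d x * (d x * d y) + d x * (d x * y) = d x * (d x * d y)
    have := add_left_cancel (a := d x * (d x * d y))
      (b := d x * (d x * y)) (c := 0) (by rw [add_zero]; exact h)
    exact this
  -- conclude d x = 0, contradiction
  have final : ∀ n : N, d x * n * d x = 0 := by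
    intro n
    rw [lnrA, ← comm n]
    exact sq n
  rcases hp (d x) (d x) final with h | h <;> exact hx h
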